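/- The unbounded dwarfed d-cube has exactly 2^d + d·2^{d−1} + 1 faces (including the empty face and D itself): for d ≥ 1, let D = {y ∈ ℝ^d : (∀ i, 0 ≤ y i) ∧ ∀ i, (3/2) * y i − Σ_j y j ≤ 1}. Then Set.ncard {F : Set (EuclideanSpace ℝ (Fin d)) | IsExposed ℝ D F} = 2^d + d * 2^(d−1) + 1. -/

import Mathlib

open Finset

noncomputable def hmap {d : ℕ} (i : Fin d) : EuclideanSpace ℝ (Fin d) →L[ℝ] ℝ :=
  (3/2 : ℝ) • EuclideanSpace.proj i - ∑ j, EuclideanSpace.proj j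

lemma hmap_apply {d : ℕ} (i : Fin d) (y : EuclideanSpace ℝ (Fin d)) :
    hmap i y = (3/2) * y i - ∑ j, y j := by
  simp [hmap]

def Dset (d : ℕ) : Set (EuclideanSpace ℝ (Fin d)) :=
  {y | (∀ i, 0 ≤ y i) ∧ ∀ i, hmap i y ≤ 1}

lemma mem_Dset {d : ℕ} {y : EuclideanSpace ℝ (Fin d)} :
    y ∈ Dset d ↔ (∀ i, 0 ≤ y i) ∧ ∀ i, hmap i y ≤ 1 := Iff.rfl

lemma zero_mem_Dset {d : ℕ} : (0 : EuclideanSpace ℝ (Fin d)) ∈ Dset d := by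
  constructor
  · intro i; simp
  · intro i; simp [hmap_apply]

lemma convex_Dset {d : ℕ} : Convex ℝ (Dset d) := by
  intro x hx y hy a b ha hb hab
  constructor
  · intro i
    have : (a • x + b • y) i = a * x i + b * y i := by
      simp [PiLp.add_apply, PiLp.smul_apply]
    rw [this]
    have := hx.1 i; have := hy.1 i
    positivity
  · intro i
    have : hmap i (a • x + b • y) = a * hmap i x + b * hmap i y := by
      simp [map_add, map_smul]
    rw [this]
    calc a * hmap i x + b * hmap i y ≤ a * 1 + b * 1 := by
          gcongr; exacts [hx.2 i, hy.2 i]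
      _ = 1 := by linarith

lemma sum_nonneg_of_mem {d : ℕ} {y : EuclideanSpace ℝ (Fin d)} (hy : y ∈ Dset d) :
    0 ≤ ∑ j, y j :=
  Finset.sum_nonneg fun j _ => hy.1 j

/-- at most one dwarfing-type constraint can be tight at a point of `Dset`. -/
lemma tight_unique {d : ℕ} {y : EuclideanSpace ℝ (Fin d)} (hy : y ∈ Dset d)
    {i j : Fin d} (hij : i ≠ j) (hi : hmap i y = 1) (hj : hmap j y = 1) : False := by
  rw [hmap_apply] at hi hj
  have hsum : y i + y j ≤ ∑ k, y k := by
    have : ∑ k ∈ ({i, j} : Finset (Fin d)), y k ≤ ∑ k, y k :=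
      Finset.sum_le_sum_of_subset_of_nonneg (Finset.subset_univ _)
        (fun k _ _ => hy.1 k)
    rwa [Finset.sum_pair hij] at this
  have h0 : 0 ≤ ∑ k, y k := sum_nonneg_of_mem hy
  linarith

def Phi {d : ℕ} (S : Finset (Fin d)) : Set (EuclideanSpace ℝ (Fin d)) :=
  {x ∈ Dset d | ∀ j ∈ S, x j = 0}

def Psi {d : ℕ} (p : Fin d × Finset (Fin d)) : Set (EuclideanSpace ℝ (Fin d)) :=
  {x ∈ Dset d | hmap p.1 x = 1 ∧ ∀ j ∈ p.2, x j = 0}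

lemma single_sum {d : ℕ} (i : Fin d) (c : ℝ) : ∑ k, EuclideanSpace.single i c k = c := by
  simp [EuclideanSpace.single_apply]

lemma single_mem_Dset {d : ℕ} (i : Fin d) {c : ℝ} (h0 : 0 ≤ c) (h1 : c ≤ 2) :
    EuclideanSpace.single i c ∈ Dset d := by
  constructor
  · intro k; simp [EuclideanSpace.single_apply]; positivity
  · intro k
    rw [hmap_apply, single_sum]
    rcases eq_or_ne k i with rfl | hk
    · simp; linarith
    · rw [EuclideanSpace.single_apply, if_neg hk]; linarith

lemma hmap_single {d : ℕ} (k i : Fin d) (c : ℝ) :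
    hmap k (EuclideanSpace.single i c) = (if k = i then (3/2) * c else 0) - c := by
  rw [hmap_apply, single_sum, EuclideanSpace.single_apply]
  split <;> ring
-- new part

lemma isExposed_Phi {d : ℕ} (S : Finset (Fin d)) : IsExposed ℝ (Dset d) (Phi S) := by
  intro _
  refine ⟨-∑ j ∈ S, EuclideanSpace.proj j, ?_⟩
  ext x
  constructor
  · rintro ⟨hx, hS⟩
    refine ⟨hx, fun y hy => ?_⟩
    have hx0 : (-∑ j ∈ S, EuclideanSpace.proj j) x = 0 := by
      simp only [ContinuousLinearMap.neg_apply, ContinuousLinearMap.coe_sum',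
        Finset.sum_apply, PiLp.proj_apply]
      rw [Finset.sum_congr rfl fun j hj => hS j hj]
      simp
    rw [hx0]
    simp only [ContinuousLinearMap.neg_apply, ContinuousLinearMap.coe_sum',
      Finset.sum_apply, PiLp.proj_apply, neg_nonpos]
    exact Finset.sum_nonneg fun j _ => hy.1 j
  · rintro ⟨hx, hmax⟩
    refine ⟨hx, ?_⟩
    have h0 := hmax 0 zero_mem_Dset
    simp only [ContinuousLinearMap.neg_apply, ContinuousLinearMap.coe_sum',
      Finset.sum_apply, PiLp.proj_apply, map_zero] at h0
    have hsum : ∑ j ∈ S, x j ≤ 0 := by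
      simpa using h0
    have hsum0 : ∑ j ∈ S, x j = 0 :=
      le_antisymm hsum (Finset.sum_nonneg fun j _ => hx.1 j)
    intro j hj
    have := (Finset.sum_eq_zero_iff_of_nonneg (fun j _ => hx.1 j)).1 hsum0 j hj
    exact this

lemma isExposed_Psi {d : ℕ} (p : Fin d × Finset (Fin d)) (hp : p.1 ∉ p.2) :
    IsExposed ℝ (Dset d) (Psi p) := by
  intro _
  obtain ⟨i, S⟩ := p
  simp only at hp
  refine ⟨(hmap i - ∑ j ∈ S, EuclideanSpace.proj j : EuclideanSpace ℝ (Fin d) →L[ℝ] ℝ), ?_⟩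
  have lval : ∀ y : EuclideanSpace ℝ (Fin d),
      (hmap i - ∑ j ∈ S, EuclideanSpace.proj j : EuclideanSpace ℝ (Fin d) →L[ℝ] ℝ) y = hmap i y - ∑ j ∈ S, y j := by
    intro y
    simp [ContinuousLinearMap.sub_apply, ContinuousLinearMap.coe_sum', Finset.sum_apply]
  ext x
  constructor
  · rintro ⟨hx, hx1, hS⟩
    refine ⟨hx, fun y hy => ?_⟩
    rw [lval, lval, hx1, Finset.sum_congr rfl fun j hj => hS j hj]
    have : ∑ j ∈ S, y j ≥ 0 := Finset.sum_nonneg fun j _ => hy.1 j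
    have := hy.2 i
    simp only [Finset.sum_const_zero, sub_zero]
    linarith
  · rintro ⟨hx, hmax⟩
    have hu : EuclideanSpace.single i 2 ∈ Dset d := single_mem_Dset i (by norm_num) le_rfl
    have h1 := hmax _ hu
    rw [lval, lval, hmap_single] at h1
    have hS0 : ∑ j ∈ S, EuclideanSpace.single i (2:ℝ) j = 0 := by
      refine Finset.sum_eq_zero fun j hj => ?_
      rw [EuclideanSpace.single_apply, if_neg]
      rintro rfl; exact hp hj
    rw [hS0, if_pos rfl] at h1
    norm_num at h1
    -- h1 : 1 ≤ hmap i x - ∑ j in S, x j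
    have hle : hmap i x ≤ 1 := hx.2 i
    have hge : (0:ℝ) ≤ ∑ j ∈ S, x j := Finset.sum_nonneg fun j _ => hx.1 j
    have hx1 : hmap i x = 1 := by linarith
    have hsum0 : ∑ j ∈ S, x j = 0 := by linarith
    exact ⟨hx, hx1, fun j hj =>
      (Finset.sum_eq_zero_iff_of_nonneg (fun j _ => hx.1 j)).1 hsum0 j hj⟩
-- completeness
set_option maxHeartbeats 1000000 in
lemma faces_complete {d : ℕ} (hd : 1 ≤ d) {F : Set (EuclideanSpace ℝ (Fin d))}
    (hF : IsExposed ℝ (Dset d) F) :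
    F = ∅ ∨ (∃ S : Finset (Fin d), F = Phi S) ∨
      (∃ p : Fin d × Finset (Fin d), p.1 ∉ p.2 ∧ F = Psi p) := by
  rcases F.eq_empty_or_nonempty with h | hne
  · exact Or.inl h
  right
  obtain ⟨l, hFl⟩ := hF hne
  obtain ⟨x₀, hx₀⟩ := hne
  have hx₀' := hFl ▸ hx₀
  obtain ⟨hx₀A, hx₀max⟩ := hx₀'
  have hFsub : F ⊆ Dset d := by rw [hFl]; exact fun x hx => hx.1
  have hFmax : ∀ x ∈ F, ∀ y ∈ Dset d, l y ≤ l x := by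
    rw [hFl]; exact fun x hx => hx.2
  have hFmem : ∀ x ∈ Dset d, (∀ y ∈ Dset d, l y ≤ l x) → x ∈ F := by
    rw [hFl]; exact fun x hx h => ⟨hx, h⟩
  classical
  set S : Finset (Fin d) := Finset.univ.filter (fun j => ∀ x ∈ F, x j = 0) with hSdef
  set T : Finset (Fin d) := Finset.univ.filter (fun i => ∀ x ∈ F, hmap i x = 1) with hTdef
  have hmemS : ∀ j, j ∈ S ↔ ∀ x ∈ F, x j = 0 := by
    intro j; simp [hSdef]
  have hmemT : ∀ i, i ∈ T ↔ ∀ x ∈ F, hmap i x = 1 := by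
    intro i; simp [hTdef]
  -- witnesses
  have hw : ∀ j : Fin d, ∃ w ∈ F, (j ∉ S → w j ≠ 0) := by
    intro j
    by_cases hj : j ∈ S
    · exact ⟨x₀, hx₀, fun h => absurd hj h⟩
    · have := (hmemS j).not.1 hj
      push_neg at this
      obtain ⟨w, hwF, hwj⟩ := this
      exact ⟨w, hwF, fun _ => hwj⟩
  have hv : ∀ i : Fin d, ∃ v ∈ F, (i ∉ T → hmap i v ≠ 1) := by
    intro i
    by_cases hi : i ∈ T
    · exact ⟨x₀, hx₀, fun h => absurd hi h⟩
    · have := (hmemT i).not.1 hi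
      push_neg at this
      obtain ⟨v, hvF, hvi⟩ := this
      exact ⟨v, hvF, fun _ => hvi⟩
  choose w hwF hwj using hw
  choose v hvF hvi using hv
  -- centroid z
  set ι := Sum (Fin d) (Sum (Fin d) Unit) with hι
  set q : ι → EuclideanSpace ℝ (Fin d) := fun k =>
    Sum.elim w (Sum.elim v (fun _ => x₀)) k with hq
  have hqF : ∀ k, q k ∈ F := by
    rintro (j | i | u)
    · exact hwF j
    · exact hvF i
    · exact hx₀
  have hcard : (Fintype.card ι : ℝ) = 2 * d + 1 := by
    simp [hι, Fintype.card_sum]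
    push_cast
    ring
  have hcardpos : (0:ℝ) < Fintype.card ι := by rw [hcard]; positivity
  set n : ℝ := (Fintype.card ι : ℝ) with hn
  have hnpos : 0 < n := hcardpos
  set z : EuclideanSpace ℝ (Fin d) := ∑ k : ι, n⁻¹ • q k with hz
  have hzF : z ∈ F := by
    have hconv : Convex ℝ F := by
      rw [hFl]
      intro x hx y hy a b ha hb hab
      refine ⟨convex_Dset hx.1 hy.1 ha hb hab, fun u hu => ?_⟩
      have := hx.2 u hu
      have := hy.2 u hu
      have : l (a • x + b • y) = a * l x + b * l y := by
        simp [map_add, map_smul]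
      rw [this]
      calc l u = a * l u + b * l u := by rw [← add_mul, hab, one_mul]
        _ ≤ a * l x + b * l y :=
          add_le_add (mul_le_mul_of_nonneg_left (hx.2 u hu) ha)
            (mul_le_mul_of_nonneg_left (hy.2 u hu) hb)
    refine hconv.sum_mem (fun k _ => by positivity) ?_ (fun k _ => hqF k)
    rw [Finset.sum_const, Finset.card_univ, nsmul_eq_mul, hn]
    field_simp
    exact div_self hcardpos.ne'
  -- coordinates of z
  have hzcoord : ∀ j : Fin d, z j = ∑ k : ι, n⁻¹ * q k j := by
    intro j
    have : (EuclideanSpace.proj j : EuclideanSpace ℝ (Fin d) →L[ℝ] ℝ) z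
        = ∑ k : ι, n⁻¹ * q k j := by
      rw [hz, map_sum]
      exact Finset.sum_congr rfl fun k _ => by simp
    simpa using this
  have hzh : ∀ i : Fin d, hmap i z = ∑ k : ι, n⁻¹ * hmap i (q k) := by
    intro i
    rw [hz, map_sum]
    exact Finset.sum_congr rfl fun k _ => by simp
  have hzS : ∀ j ∈ S, z j = 0 := by
    intro j hj
    rw [hzcoord]
    refine Finset.sum_eq_zero fun k _ => ?_
    rw [(hmemS j).1 hj (q k) (hqF k), mul_zero]
  have hzpos : ∀ j ∉ S, 0 < z j := by
    intro j hj
    rw [hzcoord]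
    refine Finset.sum_pos' (fun k _ => ?_) ⟨Sum.inl j, Finset.mem_univ _, ?_⟩
    · have := (hFsub (hqF k)).1 j
      positivity
    · have h1 : q (Sum.inl j) = w j := rfl
      rw [h1]
      have h2 : 0 ≤ w j j := (hFsub (hwF j)).1 j
      have h3 : w j j ≠ 0 := hwj j hj
      have : 0 < w j j := lt_of_le_of_ne h2 (Ne.symm h3)
      positivity
  have hzT : ∀ i ∈ T, hmap i z = 1 := by
    intro i hi
    rw [hzh]
    have : ∀ k : ι, n⁻¹ * hmap i (q k) = n⁻¹ := by
      intro k; rw [(hmemT i).1 hi (q k) (hqF k), mul_one]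
    rw [Finset.sum_congr rfl fun k _ => this k, Finset.sum_const, Finset.card_univ,
      nsmul_eq_mul, hn]
    field_simp
    exact div_self hcardpos.ne'
  have hzTlt : ∀ i ∉ T, hmap i z < 1 := by
    intro i hi
    rw [hzh]
    have hone : (1:ℝ) = ∑ _k : ι, n⁻¹ * 1 := by
      rw [Finset.sum_const, Finset.card_univ, nsmul_eq_mul, hn]
      field_simp
      exact (div_self hcardpos.ne').symm
    rw [hone]
    refine Finset.sum_lt_sum (fun k _ => ?_) ⟨Sum.inr (Sum.inl i), Finset.mem_univ _, ?_⟩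
    · exact mul_le_mul_of_nonneg_left ((hFsub (hqF k)).2 i) (by positivity)
    · have h1 : q (Sum.inr (Sum.inl i)) = v i := rfl
      rw [h1]
      have h2 : hmap i (v i) ≤ 1 := (hFsub (hvF i)).2 i
      have h3 : hmap i (v i) ≠ 1 := hvi i hi
      have h4 : hmap i (v i) < 1 := lt_of_le_of_ne h2 h3
      have h5 : (0:ℝ) < n⁻¹ := by positivity
      exact mul_lt_mul_of_pos_left h4 h5
  -- the key perturbation step
  have key : ∀ x ∈ Dset d, (∀ j ∈ S, x j = 0) → (∀ i ∈ T, hmap i x = 1) → x ∈ F := by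
    intro x hxA hxS hxT
    have hne' : (Finset.univ : Finset (Fin d)).Nonempty := by
      have : Nonempty (Fin d) := ⟨⟨0, hd⟩⟩
      exact Finset.univ_nonempty
    set m : ℝ := Finset.univ.inf' hne'
      (fun j => min (if j ∈ S then 1 else z j) (if j ∈ T then 1 else 1 - hmap j z)) with hm
    have hmpos : 0 < m := by
      rw [hm, Finset.lt_inf'_iff]
      intro j _
      refine lt_min ?_ ?_
      · split
        · norm_num
        · exact hzpos j (by assumption)
      · split
        · norm_num
        · have := hzTlt j (by assumption); linarith
    have hmS : ∀ j ∉ S, m ≤ z j := by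
      intro j hj
      calc m ≤ _ := Finset.inf'_le _ (Finset.mem_univ j)
        _ ≤ (if j ∈ S then 1 else z j) := min_le_left _ _
        _ = z j := if_neg hj
    have hmT : ∀ i ∉ T, m ≤ 1 - hmap i z := by
      intro i hi
      calc m ≤ _ := Finset.inf'_le _ (Finset.mem_univ i)
        _ ≤ (if i ∈ T then 1 else 1 - hmap i z) := min_le_right _ _
        _ = 1 - hmap i z := if_neg hi
    set c : ℝ := Finset.univ.sup' hne'
      (fun j => max |x j - z j| |hmap j x - hmap j z|) + 1 with hc
    have hsup : ∀ j : Fin d, max |x j - z j| |hmap j x - hmap j z| ≤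
        Finset.univ.sup' hne' (fun j => max |x j - z j| |hmap j x - hmap j z|) :=
      fun j => Finset.le_sup' (fun j => max |x j - z j| |hmap j x - hmap j z|)
        (Finset.mem_univ j)
    have hsupnn : 0 ≤ Finset.univ.sup' hne'
        (fun j => max |x j - z j| |hmap j x - hmap j z|) := by
      obtain ⟨j, hj⟩ := hne'
      have h1 := hsup j
      have h2 : (0:ℝ) ≤ |x j - z j| := abs_nonneg _
      have h3 := le_max_left |x j - z j| |hmap j x - hmap j z|
      linarith
    have hcpos : 0 < c := by rw [hc]; linarith
    have hcx : ∀ j, |x j - z j| ≤ c := by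
      intro j
      have h1 := hsup j
      have h3 := le_max_left |x j - z j| |hmap j x - hmap j z|
      rw [hc]; linarith
    have hch : ∀ j, |hmap j x - hmap j z| ≤ c := by
      intro j
      have h1 := hsup j
      have h3 := le_max_right |x j - z j| |hmap j x - hmap j z|
      rw [hc]; linarith
    set t : ℝ := m / c with ht
    have htpos : 0 < t := div_pos hmpos hcpos
    set u : EuclideanSpace ℝ (Fin d) := z + t • (z - x) with hu
    have hucoord : ∀ j, u j = z j + t * (z j - x j) := by
      intro j; simp [hu, PiLp.add_apply, PiLp.smul_apply, PiLp.sub_apply]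
    have huh : ∀ i, hmap i u = hmap i z + t * (hmap i z - hmap i x) := by
      intro i; simp [hu, map_add, map_smul, map_sub]
    have htbound : ∀ a : ℝ, |a| ≤ c → t * |a| ≤ m := by
      intro a ha
      calc t * |a| ≤ t * c := by gcongr
        _ = m := by rw [ht]; field_simp
    have huA : u ∈ Dset d := by
      constructor
      · intro j
        rw [hucoord]
        by_cases hj : j ∈ S
        · rw [hzS j hj, hxS j hj]; simp
        · have h1 : t * (z j - x j) ≥ -(t * |x j - z j|) := by
            have : -(|x j - z j|) ≤ z j - x j := by
              rw [abs_sub_comm]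
              exact neg_abs_le _
            nlinarith [htpos.le, abs_nonneg (x j - z j)]
          have h2 : t * |x j - z j| ≤ m := htbound _ (hcx j)
          have h3 : m ≤ z j := hmS j hj
          linarith
      · intro i
        rw [huh]
        by_cases hi : i ∈ T
        · rw [hzT i hi, hxT i hi]; simp
        · have h1 : t * (hmap i z - hmap i x) ≤ t * |hmap i x - hmap i z| := by
            have : hmap i z - hmap i x ≤ |hmap i x - hmap i z| := by
              rw [abs_sub_comm]; exact le_abs_self _
            nlinarith [htpos.le]
          have h2 : t * |hmap i x - hmap i z| ≤ m := htbound _ (hch i)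
          have h3 : m ≤ 1 - hmap i z := hmT i hi
          linarith
    -- conclude
    have hlu : l u = l z + t * (l z - l x) := by
      simp [hu, map_add, map_smul, map_sub]
    have hul : l u ≤ l z := hFmax z hzF u huA
    have hzlex : l z ≤ l x := by nlinarith [hlu ▸ hul]
    refine hFmem x hxA fun y hy => ?_
    calc l y ≤ l z := hFmax z hzF y hy
      _ ≤ l x := hzlex
  -- case split on T
  by_cases hT : T = ∅
  · left
    refine ⟨S, ?_⟩
    apply Set.Subset.antisymm
    · intro x hx
      exact ⟨hFsub hx, fun j hj => (hmemS j).1 hj x hx⟩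
    · rintro x ⟨hxA, hxS⟩
      exact key _ hxA hxS (fun i hi => by rw [hT] at hi; exact absurd hi (Finset.notMem_empty i))
  · right
    obtain ⟨i, hiT⟩ := Finset.nonempty_iff_ne_empty.2 hT
    have hTi : T = {i} := by
      apply Finset.eq_singleton_iff_unique_mem.2
      refine ⟨hiT, fun j hj => ?_⟩
      by_contra hji
      exact tight_unique (hFsub hx₀) hji ((hmemT j).1 hj x₀ hx₀) ((hmemT i).1 hiT x₀ hx₀)
    have hiS : i ∉ S := by
      intro hiS
      have h1 : x₀ i = 0 := (hmemS i).1 hiS x₀ hx₀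
      have h2 : hmap i x₀ = 1 := (hmemT i).1 hiT x₀ hx₀
      rw [hmap_apply, h1, mul_zero, zero_sub] at h2
      have h3 : 0 ≤ ∑ j, x₀ j := sum_nonneg_of_mem (hFsub hx₀)
      linarith
    refine ⟨(i, S), hiS, ?_⟩
    apply Set.Subset.antisymm
    · intro x hx
      exact ⟨hFsub hx, (hmemT i).1 hiT x hx, fun j hj => (hmemS j).1 hj x hx⟩
    · rintro x ⟨hxA, hx1, hxS⟩
      refine key _ hxA hxS fun k hk => ?_
      rw [hTi, Finset.mem_singleton] at hk
      subst hk
      exact hx1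
lemma zero_mem_Phi {d : ℕ} (S : Finset (Fin d)) : (0 : EuclideanSpace ℝ (Fin d)) ∈ Phi S :=
  ⟨zero_mem_Dset, fun j _ => rfl⟩

lemma single_mem_Psi {d : ℕ} {i : Fin d} {S : Finset (Fin d)} (hp : i ∉ S) :
    EuclideanSpace.single i 2 ∈ Psi (i, S) := by
  refine ⟨single_mem_Dset i (by norm_num) le_rfl, ?_, ?_⟩
  · rw [hmap_single, if_pos rfl]; norm_num
  · intro j hj
    rw [EuclideanSpace.single_apply, if_neg]
    rintro rfl; exact hp hj

lemma zero_not_mem_Psi {d : ℕ} (p : Fin d × Finset (Fin d)) :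
    (0 : EuclideanSpace ℝ (Fin d)) ∉ Psi p := by
  rintro ⟨-, h1, -⟩
  rw [hmap_apply] at h1
  simp at h1

lemma Phi_injective {d : ℕ} : Function.Injective (Phi (d := d)) := by
  have hsub : ∀ S S' : Finset (Fin d), Phi S = Phi S' → S ⊆ S' := by
    intro S S' h j hj
    by_contra hj'
    have hu : EuclideanSpace.single j (1/2 : ℝ) ∈ Phi S' := by
      refine ⟨single_mem_Dset j (by norm_num) (by norm_num), fun k hk => ?_⟩
      rw [EuclideanSpace.single_apply, if_neg]
      rintro rfl; exact hj' hk
    rw [← h] at hu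
    have := hu.2 j hj
    rw [EuclideanSpace.single_apply, if_pos rfl] at this
    norm_num at this
  intro S S' h
  exact Finset.Subset.antisymm (hsub _ _ h) (hsub _ _ h.symm)

lemma Psi_inj {d : ℕ} {p q : Fin d × Finset (Fin d)} (hp : p.1 ∉ p.2) (hq : q.1 ∉ q.2)
    (h : Psi p = Psi q) : p = q := by
  obtain ⟨i, S⟩ := p
  obtain ⟨i', S'⟩ := q
  simp only at hp hq
  have hii : i = i' := by
    have hu := single_mem_Psi hp
    rw [h] at hu
    have h1 := hu.2.1
    rw [hmap_single] at h1
    by_contra hne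
    rw [if_neg (Ne.symm hne)] at h1
    norm_num at h1
  subst hii
  have hsub : ∀ S S' : Finset (Fin d), i ∉ S → i ∉ S' → Psi (i, S) = Psi (i, S') → S ⊆ S' := by
    intro S S' hiS hiS' hh j hj
    by_contra hj'
    have hji : j ≠ i := by rintro rfl; exact hiS hj
    set u : EuclideanSpace ℝ (Fin d) :=
      EuclideanSpace.single i 4 + EuclideanSpace.single j 1 with hudef
    have hucoord : ∀ k, u k = (if k = i then (4:ℝ) else 0) + (if k = j then 1 else 0) := by
      intro k
      simp [hudef, PiLp.add_apply, EuclideanSpace.single_apply]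
    have husum : ∑ k, u k = 5 := by
      rw [Finset.sum_congr rfl fun k _ => hucoord k, Finset.sum_add_distrib]
      simp [Finset.sum_ite_eq']
      norm_num
    have huh : ∀ k, hmap k u = (3/2) * u k - 5 := by
      intro k; rw [hmap_apply, husum]
    have huD : u ∈ Dset d := by
      constructor
      · intro k; rw [hucoord]; split <;> split <;> norm_num
      · intro k
        rw [huh, hucoord]
        rcases eq_or_ne k i with rfl | hki
        · rw [if_pos rfl, if_neg (Ne.symm hji)]; norm_num
        · rw [if_neg hki]; split <;> norm_num
    have huPsi : u ∈ Psi (i, S') := by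
      refine ⟨huD, ?_, ?_⟩
      · rw [huh, hucoord, if_pos rfl, if_neg (Ne.symm hji)]; norm_num
      · intro k hk
        have hki : k ≠ i := by rintro rfl; exact hiS' hk
        have hkj : k ≠ j := by rintro rfl; exact hj' hk
        rw [hucoord, if_neg hki, if_neg hkj]
        norm_num
    rw [← hh] at huPsi
    have := huPsi.2.2 j hj
    rw [hucoord, if_neg hji, if_pos rfl] at this
    norm_num at this
  have : S = S' :=
    Finset.Subset.antisymm (hsub _ _ hp hq h) (hsub _ _ hq hp h.symm)
  rw [this]

lemma card_Pf {d : ℕ} :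
    (Finset.univ.filter fun p : Fin d × Finset (Fin d) => p.1 ∉ p.2).card = d * 2 ^ (d - 1) := by
  classical
  set Pf := Finset.univ.filter fun p : Fin d × Finset (Fin d) => p.1 ∉ p.2 with hPf
  have hfil : ∀ i : Fin d,
      (Finset.univ.filter fun S : Finset (Fin d) => i ∉ S) = (Finset.univ.erase i).powerset := by
    intro i
    ext S
    simp [Finset.mem_powerset, Finset.subset_erase]
  have h1 : Pf.card = ∑ i : Fin d, (Finset.univ.filter fun S : Finset (Fin d) => i ∉ S).card := by
    rw [Finset.card_eq_sum_card_fiberwise (f := Prod.fst) (t := Finset.univ)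
      (fun x _ => Finset.mem_univ _)]
    refine Finset.sum_congr rfl fun i _ => ?_
    refine Finset.card_bij (fun p _ => p.2) ?_ ?_ ?_
    · rintro ⟨a, S⟩ hp
      simp only [hPf, Finset.mem_filter, Finset.mem_univ, true_and] at hp
      obtain ⟨h2, h3⟩ := hp
      subst h3
      simp [h2]
    · rintro ⟨a, S⟩ hp ⟨b, S'⟩ hq hSS
      simp only [hPf, Finset.mem_filter, Finset.mem_univ, true_and] at hp hq
      simp only at hSS
      rw [Prod.mk.injEq]
      exact ⟨hp.2.trans hq.2.symm, hSS⟩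
    · intro S hS
      simp only [Finset.mem_filter, Finset.mem_univ, true_and] at hS
      exact ⟨(i, S), by simp [hPf, hS], rfl⟩
  rw [h1]
  have h2 : ∀ i : Fin d,
      (Finset.univ.filter fun S : Finset (Fin d) => i ∉ S).card = 2 ^ (d - 1) := by
    intro i
    rw [hfil i, Finset.card_powerset, Finset.card_erase_of_mem (Finset.mem_univ i),
      Finset.card_univ, Fintype.card_fin]
  rw [Finset.sum_congr rfl fun i _ => h2 i, Finset.sum_const, Finset.card_univ,
    Fintype.card_fin, smul_eq_mul]

/-- For `d ≥ 1`, the unbounded dwarfed `d`-cube has exactly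
`2^d + d·2^(d−1) + 1` exposed faces (including `∅` and `D` itself). -/
theorem stmt_12 (d : ℕ) (hd : 1 ≤ d)
    (D : Set (EuclideanSpace ℝ (Fin d)))
    (hD : D = {y : EuclideanSpace ℝ (Fin d) |
      (∀ i, 0 ≤ y i) ∧ ∀ i, (3 / 2) * y i - ∑ j, y j ≤ 1}) :
    Set.ncard {F : Set (EuclideanSpace ℝ (Fin d)) | IsExposed ℝ D F} =
      2 ^ d + d * 2 ^ (d - 1) + 1 := by
  classical
  have hDeq : D = Dset d := by
    rw [hD]; ext y; simp [Dset, hmap_apply]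
  rw [hDeq]
  set Pf := Finset.univ.filter fun p : Fin d × Finset (Fin d) => p.1 ∉ p.2 with hPf
  set Ff : Finset (Set (EuclideanSpace ℝ (Fin d))) :=
    insert ∅ ((Finset.univ.image (Phi (d := d))) ∪ (Pf.image Psi)) with hFf
  have hset : {F : Set (EuclideanSpace ℝ (Fin d)) | IsExposed ℝ (Dset d) F} = ↑Ff := by
    ext F
    simp only [Set.mem_setOf_eq, hFf, Finset.coe_insert, Set.mem_insert_iff,
      Finset.coe_union, Set.mem_union, Finset.coe_image, Set.mem_image,
      Finset.mem_coe, Finset.mem_univ, true_and, Finset.mem_filter, hPf]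
    constructor
    · intro h
      rcases faces_complete hd h with rfl | ⟨S, rfl⟩ | ⟨p, hp, rfl⟩
      · exact Or.inl rfl
      · exact Or.inr (Or.inl ⟨S, rfl⟩)
      · exact Or.inr (Or.inr ⟨p, hp, rfl⟩)
    · rintro (rfl | ⟨S, rfl⟩ | ⟨p, hp, rfl⟩)
      · intro hne
        exact absurd hne (by simp)
      · exact isExposed_Phi S
      · exact isExposed_Psi p hp
  rw [hset, Set.ncard_coe_finset, hFf]
  have hne1 : ∅ ∉ (Finset.univ.image (Phi (d := d))) ∪ (Pf.image Psi) := by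
    intro hmem
    rcases Finset.mem_union.1 hmem with hmem | hmem
    · obtain ⟨S, -, hS⟩ := Finset.mem_image.1 hmem
      exact absurd (hS ▸ zero_mem_Phi S) (Set.notMem_empty _)
    · obtain ⟨p, hpmem, hp⟩ := Finset.mem_image.1 hmem
      have hp1 : p.1 ∉ p.2 := (Finset.mem_filter.1 hpmem).2
      have := single_mem_Psi (i := p.1) (S := p.2) hp1
      rw [show ((p.1, p.2) : Fin d × Finset (Fin d)) = p from rfl, hp] at this
      exact absurd this (Set.notMem_empty _)
  have hdisj : Disjoint (Finset.univ.image (Phi (d := d))) (Pf.image Psi) := by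
    rw [Finset.disjoint_left]
    intro A hA hA'
    obtain ⟨S, -, hS⟩ := Finset.mem_image.1 hA
    obtain ⟨p, -, hp⟩ := Finset.mem_image.1 hA'
    have h0 : (0 : EuclideanSpace ℝ (Fin d)) ∈ A := hS ▸ zero_mem_Phi S
    exact zero_not_mem_Psi p (hp ▸ h0)
  rw [Finset.card_insert_of_notMem hne1, Finset.card_union_of_disjoint hdisj,
    Finset.card_image_of_injective _ Phi_injective,
    Finset.card_image_of_injOn (fun p hp q hq h =>
      Psi_inj (Finset.mem_filter.1 hp).2 (Finset.mem_filter.1 hq).2 h),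
    Finset.card_univ, Fintype.card_finset, Fintype.card_fin, card_Pf]
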